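/- Let G be a finite group acting on a commutative ring A and let I be a G-stable ideal. Suppose that for every n ≥ 1 and i = 1, 2, the group cohomology H^i(G, I^n/I^{n+1}) vanishes. Then for every n ≥ 1, the natural map of invariant unit groups ((A/I^{n+1})*)^G → ((A/I^n)*)^G is surjective, and the map H¹(G, (A/I^{n+1})*) → H¹(G, (A/I^n)*) is an isomorphism. -/

import Mathlib

open groupCohomology in
lemma stmt11_h1_solve {G M : Type} [Group G] [AddCommGroup M] [DistribMulAction G M]
    (h : Subsingleton (groupCohomology (Rep.ofDistribMulAction ℤ G M) 1))
    {f : G → M} (hf : IsCocycle₁ f) : IsCoboundary₁ f := by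
  have hc : ⇑(cocyclesOfIsCocycle₁ (k := ℤ) hf) ∈
      coboundaries₁ (Rep.ofDistribMulAction ℤ G M) :=
    (H1π_eq_zero_iff _).1 (Subsingleton.elim _ _)
  exact isCoboundary₁_of_mem_coboundaries₁ _ hc

open groupCohomology in
lemma stmt11_h2_solve {G M : Type} [Group G] [AddCommGroup M] [DistribMulAction G M]
    (h : Subsingleton (groupCohomology (Rep.ofDistribMulAction ℤ G M) 2))
    {f : G × G → M} (hf : IsCocycle₂ f) : IsCoboundary₂ f := by
  have hc : ⇑(cocyclesOfIsCocycle₂ (k := ℤ) hf) ∈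
      coboundaries₂ (Rep.ofDistribMulAction ℤ G M) :=
    (H2π_eq_zero_iff _).1 (Subsingleton.elim _ _)
  exact isCoboundary₂_of_mem_coboundaries₂ _ hc


open groupCohomology in
lemma stmt11_core {G M B C : Type} [Group G] [AddCommGroup M] [DistribMulAction G M]
    [CommRing B] [CommRing C]
    (σ : G → B →+* B) (τ : G → C →+* C) (φ : B →+* C)
    (hσ : ∀ (g h : G) (b : B), σ (g * h) b = σ g (σ h b))
    (hφσ : ∀ (g : G) (b : B), φ (σ g b) = τ g (φ b))
    (hφsurj : Function.Surjective φ)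
    (j : M →+ B)
    (hjinj : Function.Injective j)
    (hjmul : ∀ m m' : M, j m * j m' = 0)
    (hjker : ∀ b : B, φ b = 1 → ∃ m : M, (1 : B) + j m = b)
    (hφj : ∀ m : M, φ (j m) = 0)
    (hjσ : ∀ (g : G) (m : M), j (g • m) = σ g (j m))
    (h1 : Subsingleton (groupCohomology (Rep.ofDistribMulAction ℤ G M) 1))
    (h2 : Subsingleton (groupCohomology (Rep.ofDistribMulAction ℤ G M) 2)) :
    (∀ u : Cˣ, (∀ g, τ g ↑u = ↑u) →
      ∃ v : Bˣ, (∀ g, σ g ↑v = ↑v) ∧ φ ↑v = ↑u) ∧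
    (∀ c : G → Bˣ, (∀ g h, ((c (g * h) : Bˣ) : B) = σ g ↑(c h) * ↑(c g)) →
      (∃ b : Cˣ, ∀ g, φ ↑(c g) = τ g ↑b * ↑(b⁻¹)) →
      ∃ a : Bˣ, ∀ g, ((c g : Bˣ) : B) = σ g ↑a * ↑(a⁻¹)) ∧
    (∀ c : G → Cˣ, (∀ g h, ((c (g * h) : Cˣ) : C) = τ g ↑(c h) * ↑(c g)) →
      ∃ c' : G → Bˣ, (∀ g h, ((c' (g * h) : Bˣ) : B) = σ g ↑(c' h) * ↑(c' g)) ∧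
        ∀ g, φ ↑(c' g) = ↑(c g)) := by
  -- the multiplicative exponential `E : M → Bˣ`
  have hadd : ∀ m m' : M, ((1 : B) + j m) * (1 + j m') = 1 + j (m + m') := by
    intro m m'
    rw [map_add]
    linear_combination hjmul m m'
  let E : M → Bˣ := fun m =>
    ⟨1 + j m, 1 + j (-m), by rw [hadd]; simp, by rw [hadd]; simp⟩
  have hE : ∀ m, ((E m : Bˣ) : B) = 1 + j m := fun m => rfl
  have hEmul : ∀ m m' : M, E (m + m') = E m * E m' := by
    intro m m'
    ext
    rw [Units.val_mul, hE, hE, hE, hadd]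
  have hE0 : E 0 = 1 := by ext; rw [hE]; simp
  have hEinv : ∀ m, E (-m) = (E m)⁻¹ := by
    intro m
    refine eq_inv_of_mul_eq_one_left ?_
    rw [← hEmul, neg_add_cancel, hE0]
  have hEinj : Function.Injective E := by
    intro m m' h
    apply hjinj
    have := congrArg Units.val h
    rw [hE, hE] at this
    exact add_left_cancel this
  -- units-level maps
  let UB : G → Bˣ →* Bˣ := fun g => Units.map (σ g).toMonoidHom
  let UC : G → Cˣ →* Cˣ := fun g => Units.map (τ g).toMonoidHom
  let Φ : Bˣ →* Cˣ := Units.map φ.toMonoidHom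
  have hUB : ∀ (g : G) (v : Bˣ), ((UB g v : Bˣ) : B) = σ g ↑v := fun g v => rfl
  have hUC : ∀ (g : G) (v : Cˣ), ((UC g v : Cˣ) : C) = τ g ↑v := fun g v => rfl
  have hΦ : ∀ v : Bˣ, ((Φ v : Cˣ) : C) = φ ↑v := fun v => rfl
  have hUBcomp : ∀ (g h : G) (v : Bˣ), UB (g * h) v = UB g (UB h v) := by
    intro g h v; ext; rw [hUB, hUB, hUB, hσ]
  have hΦUB : ∀ (g : G) (v : Bˣ), Φ (UB g v) = UC g (Φ v) := by
    intro g v; ext; rw [hΦ, hUB, hUC, hΦ, hφσ]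
  have hUBE : ∀ (g : G) (m : M), UB g (E m) = E (g • m) := by
    intro g m; ext; rw [hUB, hE, hE, map_add, map_one, hjσ]
  have hΦE : ∀ m : M, Φ (E m) = 1 := by
    intro m; ext; rw [hΦ, hE, map_add, map_one, hφj, add_zero, Units.val_one]
  have hkerU : ∀ v : Bˣ, Φ v = 1 → ∃ m : M, E m = v := by
    intro v hv
    obtain ⟨m, hm⟩ := hjker ↑v (by rw [← hΦ v, hv, Units.val_one])
    exact ⟨m, by ext; rw [hE, hm]⟩
  have hliftU : ∀ w : Cˣ, ∃ v : Bˣ, Φ v = w := by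
    intro w
    obtain ⟨b1, hb1⟩ := hφsurj (↑w : C)
    obtain ⟨b2, hb2⟩ := hφsurj (↑(w⁻¹) : C)
    have h12 : φ (b1 * b2) = 1 := by
      rw [map_mul, hb1, hb2, Units.mul_inv]
    obtain ⟨m, hm⟩ := hjker _ h12
    have hprod : b1 * (b2 * (1 + j (-m))) = 1 := by
      have h2m : ((1 : B) + j m) * (1 + j (-m)) = 1 := by rw [hadd]; simp
      calc b1 * (b2 * (1 + j (-m))) = (b1 * b2) * (1 + j (-m)) := by ring
        _ = ((1 : B) + j m) * (1 + j (-m)) := by rw [hm]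
        _ = 1 := h2m
    obtain ⟨v, hv⟩ := IsUnit.of_mul_eq_one (a := b1) _ hprod
    exact ⟨v, by ext; rw [hΦ, hv, hb1]⟩
  refine ⟨?_, ?_, ?_⟩
  · -- surjectivity on invariants
    intro u hu
    have huU : ∀ g, UC g u = u := fun g => by ext; rw [hUC]; exact hu g
    obtain ⟨v₀, hv₀⟩ := hliftU u
    have hker_g : ∀ g, Φ (UB g v₀ * v₀⁻¹) = 1 := by
      intro g
      rw [map_mul, map_inv, hΦUB, hv₀, huU, mul_inv_cancel]
    choose f hf using fun g => hkerU _ (hker_g g)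
    have hcoc : IsCocycle₁ f := by
      intro g h
      apply hEinj
      rw [hEmul, ← hUBE]
      simp only [hf]
      rw [map_mul, map_inv, ← hUBcomp]
      apply Additive.ofMul.injective
      simp only [ofMul_mul, ofMul_inv, ofMul_one]
      abel
    obtain ⟨m₀, hm₀⟩ := stmt11_h1_solve h1 hcoc
    have hv : ∀ g, UB g v₀ = E (f g) * v₀ := by
      intro g; rw [hf g, inv_mul_cancel_right]
    have hkey : ∀ g, UB g (v₀ * (E m₀)⁻¹) = v₀ * (E m₀)⁻¹ := by
      intro g
      rw [map_mul, map_inv, hUBE, hv g, ← hm₀ g, sub_eq_add_neg, hEmul, hEinv]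
      apply Additive.ofMul.injective
      simp only [ofMul_mul, ofMul_inv, ofMul_one]
      abel
    refine ⟨v₀ * (E m₀)⁻¹, fun g => ?_, ?_⟩
    · rw [← hUB]; exact congrArg Units.val (hkey g)
    · have : Φ (v₀ * (E m₀)⁻¹) = u := by
        rw [map_mul, map_inv, hΦE, inv_one, mul_one, hv₀]
      rw [← hΦ]; exact congrArg Units.val this
  · -- injectivity of H¹ map
    intro c hc hex
    have hcU : ∀ g h, c (g * h) = UB g (c h) * c g := by
      intro g h; ext; rw [Units.val_mul, hUB]; exact hc g h
    obtain ⟨b, hb⟩ := hex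
    have hbU : ∀ g, Φ (c g) = UC g b * b⁻¹ := by
      intro g; ext; rw [hΦ, Units.val_mul, hUC]; exact hb g
    obtain ⟨b', hb'⟩ := hliftU b
    have hker_g : ∀ g, Φ (c g * (UB g b')⁻¹ * b') = 1 := by
      intro g
      rw [map_mul, map_mul, map_inv, hΦUB, hb', hbU]
      apply Additive.ofMul.injective
      simp only [ofMul_mul, ofMul_inv, ofMul_one]
      abel
    choose e he using fun g => hkerU _ (hker_g g)
    have hcoc : IsCocycle₁ e := by
      intro g h
      apply hEinj
      rw [hEmul, ← hUBE]
      simp only [he]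
      rw [hcU]
      simp only [map_mul, map_inv]
      rw [← hUBcomp]
      apply Additive.ofMul.injective
      simp only [ofMul_mul, ofMul_inv, ofMul_one]
      abel
    obtain ⟨m, hm⟩ := stmt11_h1_solve h1 hcoc
    have hcg : ∀ g, c g = E (e g) * UB g b' * b'⁻¹ := by
      intro g
      rw [he g]
      apply Additive.ofMul.injective
      simp only [ofMul_mul, ofMul_inv, ofMul_one]
      abel
    have hkey : ∀ g, c g = UB g (b' * E m) * (b' * E m)⁻¹ := by
      intro g
      rw [hcg g, ← hm g, map_mul, hUBE, mul_inv, sub_eq_add_neg, hEmul, hEinv]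
      apply Additive.ofMul.injective
      simp only [ofMul_mul, ofMul_inv, ofMul_one]
      abel
    refine ⟨b' * E m, fun g => ?_⟩
    rw [← hUB, ← Units.val_mul]; exact congrArg Units.val (hkey g)
  · -- surjectivity of H¹ map
    intro c hc
    have hcU : ∀ g h, c (g * h) = UC g (c h) * c g := by
      intro g h; ext; rw [Units.val_mul, hUC]; exact hc g h
    choose cl hcl using fun g => hliftU (c g)
    have hker2 : ∀ p : G × G, Φ (UB p.1 (cl p.2) * cl p.1 * (cl (p.1 * p.2))⁻¹) = 1 := by
      intro p
      rw [map_mul, map_mul, map_inv, hΦUB]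
      rw [hcl, hcl, hcl, hcU]
      exact mul_inv_cancel _
    choose F hF using fun p => hkerU _ (hker2 p)
    have hcoc2 : IsCocycle₂ F := by
      intro g h k
      apply hEinj
      rw [hEmul, hEmul, ← hUBE]
      simp only [hF]
      simp only [map_mul, map_inv]
      rw [← hUBcomp, ← mul_assoc g h k]
      apply Additive.ofMul.injective
      simp only [ofMul_mul, ofMul_inv, ofMul_one]
      abel
    obtain ⟨x, hx⟩ := stmt11_h2_solve h2 hcoc2
    have hgh : ∀ g h : G, cl (g * h) = (E (F (g, h)))⁻¹ * UB g (cl h) * cl g := by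
      intro g h
      rw [hF (g, h)]
      apply Additive.ofMul.injective
      simp only [ofMul_mul, ofMul_inv, ofMul_one]
      abel
    have hFx : ∀ g h : G, E (F (g, h)) = E (g • x h) * (E (x (g * h)))⁻¹ * E (x g) := by
      intro g h
      rw [← hx g h, sub_eq_add_neg, hEmul, hEmul, hEinv]
    refine ⟨fun g => cl g * (E (x g))⁻¹, fun g h => ?_, fun g => ?_⟩
    · have hkey : cl (g * h) * (E (x (g * h)))⁻¹ =
          UB g (cl h * (E (x h))⁻¹) * (cl g * (E (x g))⁻¹) := by
        rw [map_mul, map_inv, hUBE, hgh g h, hFx g h]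
        apply Additive.ofMul.injective
        simp only [ofMul_mul, ofMul_inv, ofMul_one]
        abel
      rw [← hUB, ← Units.val_mul]; exact congrArg Units.val hkey
    · have : Φ (cl g * (E (x g))⁻¹) = c g := by
        rw [map_mul, map_inv, hΦE, inv_one, mul_one, hcl]
      rw [← hΦ]; exact congrArg Units.val this

/-- Let `G` be a finite group acting on a commutative ring
`A` and let `I` be a `G`-stable ideal.  Suppose `H^i(G, Iⁿ/Iⁿ⁺¹) = 0` for all
`n ≥ 1` and `i = 1, 2` (the `G`-module `Iⁿ/Iⁿ⁺¹` being given as an abstract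
`G`-module `M n` identified equivariantly with the image of `Iⁿ` in
`A/Iⁿ⁺¹`).  Then for every `n ≥ 1` the natural map of invariant unit groups
`((A/Iⁿ⁺¹)ˣ)ᴳ → ((A/Iⁿ)ˣ)ᴳ` is surjective, and the induced map
`H¹(G, (A/Iⁿ⁺¹)ˣ) → H¹(G, (A/Iⁿ)ˣ)` is an isomorphism (stated via explicit
`1`-cocycles and `1`-coboundaries; the `G`-actions on the quotients are
expressed through representatives). -/
theorem stmt11 (G A : Type) [Group G] [Finite G] [CommRing A]
    [MulSemiringAction G A] (I : Ideal A)
    (hstable : ∀ (g : G) (x : A), x ∈ I → g • x ∈ I)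
    (M : ℕ → Type) [∀ n, AddCommGroup (M n)] [∀ n, DistribMulAction G (M n)]
    (j : ∀ n, M n →+ A ⧸ I ^ (n + 1))
    (hj_inj : ∀ n, Function.Injective (j n))
    (hj_range : ∀ (n : ℕ) (x : A ⧸ I ^ (n + 1)),
      (∃ m, j n m = x) ↔ x ∈ (I ^ n).map (Ideal.Quotient.mk (I ^ (n + 1))))
    (hj_equiv : ∀ (n : ℕ) (g : G) (m : M n) (a : A),
      j n m = Ideal.Quotient.mk (I ^ (n + 1)) a →
        j n (g • m) = Ideal.Quotient.mk (I ^ (n + 1)) (g • a))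
    (h1 : ∀ n : ℕ, 1 ≤ n →
      Subsingleton (groupCohomology (Rep.ofDistribMulAction ℤ G (M n)) 1))
    (h2 : ∀ n : ℕ, 1 ≤ n →
      Subsingleton (groupCohomology (Rep.ofDistribMulAction ℤ G (M n)) 2)) :
    ∀ n : ℕ, 1 ≤ n →
      -- surjectivity of `((A/Iⁿ⁺¹)ˣ)ᴳ → ((A/Iⁿ)ˣ)ᴳ`
      ((∀ u : (A ⧸ I ^ n)ˣ,
        (∀ (g : G) (a : A), Ideal.Quotient.mk (I ^ n) a = (u : A ⧸ I ^ n) →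
          Ideal.Quotient.mk (I ^ n) (g • a) = (u : A ⧸ I ^ n)) →
        ∃ v : (A ⧸ I ^ (n + 1))ˣ,
          (∀ (g : G) (a : A),
            Ideal.Quotient.mk (I ^ (n + 1)) a = (v : A ⧸ I ^ (n + 1)) →
            Ideal.Quotient.mk (I ^ (n + 1)) (g • a) = (v : A ⧸ I ^ (n + 1))) ∧
          Ideal.Quotient.factor (Ideal.pow_le_pow_right n.le_succ)
            (v : A ⧸ I ^ (n + 1)) = (u : A ⧸ I ^ n)) ∧
      -- injectivity of `H¹(G, (A/Iⁿ⁺¹)ˣ) → H¹(G, (A/Iⁿ)ˣ)`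
      (∀ c : G → (A ⧸ I ^ (n + 1))ˣ,
        (∀ (g h : G) (x : A),
          Ideal.Quotient.mk (I ^ (n + 1)) x = (c h : A ⧸ I ^ (n + 1)) →
          (c (g * h) : A ⧸ I ^ (n + 1)) =
            Ideal.Quotient.mk (I ^ (n + 1)) (g • x) * (c g : A ⧸ I ^ (n + 1))) →
        (∃ b : (A ⧸ I ^ n)ˣ, ∀ (g : G) (a : A),
          Ideal.Quotient.mk (I ^ n) a = (b : A ⧸ I ^ n) →
          Ideal.Quotient.factor (Ideal.pow_le_pow_right n.le_succ)
              (c g : A ⧸ I ^ (n + 1)) =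
            Ideal.Quotient.mk (I ^ n) (g • a) * ((b⁻¹ : (A ⧸ I ^ n)ˣ) : A ⧸ I ^ n)) →
        ∃ a : (A ⧸ I ^ (n + 1))ˣ, ∀ (g : G) (x : A),
          Ideal.Quotient.mk (I ^ (n + 1)) x = (a : A ⧸ I ^ (n + 1)) →
          (c g : A ⧸ I ^ (n + 1)) =
            Ideal.Quotient.mk (I ^ (n + 1)) (g • x) *
              ((a⁻¹ : (A ⧸ I ^ (n + 1))ˣ) : A ⧸ I ^ (n + 1))) ∧
      -- surjectivity of `H¹(G, (A/Iⁿ⁺¹)ˣ) → H¹(G, (A/Iⁿ)ˣ)`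
      (∀ c : G → (A ⧸ I ^ n)ˣ,
        (∀ (g h : G) (x : A),
          Ideal.Quotient.mk (I ^ n) x = (c h : A ⧸ I ^ n) →
          (c (g * h) : A ⧸ I ^ n) =
            Ideal.Quotient.mk (I ^ n) (g • x) * (c g : A ⧸ I ^ n)) →
        ∃ c' : G → (A ⧸ I ^ (n + 1))ˣ,
          (∀ (g h : G) (x : A),
            Ideal.Quotient.mk (I ^ (n + 1)) x = (c' h : A ⧸ I ^ (n + 1)) →
            (c' (g * h) : A ⧸ I ^ (n + 1)) =
              Ideal.Quotient.mk (I ^ (n + 1)) (g • x) *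
                (c' g : A ⧸ I ^ (n + 1))) ∧
          ∃ b : (A ⧸ I ^ n)ˣ, ∀ (g : G) (a : A),
            Ideal.Quotient.mk (I ^ n) a = (b : A ⧸ I ^ n) →
            Ideal.Quotient.factor (Ideal.pow_le_pow_right n.le_succ)
                (c' g : A ⧸ I ^ (n + 1)) =
              (c g : A ⧸ I ^ n) *
                (Ideal.Quotient.mk (I ^ n) (g • a) *
                  ((b⁻¹ : (A ⧸ I ^ n)ˣ) : A ⧸ I ^ n)))) := by
  intro n hn
  have hpow : ∀ (k : ℕ) (g : G) (a : A), a ∈ I ^ k → g • a ∈ I ^ k := by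
    intro k g a ha
    have hmaple : Ideal.map (MulSemiringAction.toRingHom G A g) (I ^ k) ≤ I ^ k := by
      rw [Ideal.map_pow]
      exact Ideal.pow_right_mono
        (Ideal.map_le_iff_le_comap.2 fun x hx => Ideal.mem_comap.2 (hstable g x hx)) k
    exact hmaple (Ideal.mem_map_of_mem _ ha)
  let σ : G → (A ⧸ I ^ (n + 1)) →+* (A ⧸ I ^ (n + 1)) := fun g =>
    Ideal.quotientMap (I ^ (n + 1)) (MulSemiringAction.toRingHom G A g)
      (fun a ha => hpow (n + 1) g a ha)
  let τ : G → (A ⧸ I ^ n) →+* (A ⧸ I ^ n) := fun g =>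
    Ideal.quotientMap (I ^ n) (MulSemiringAction.toRingHom G A g)
      (fun a ha => hpow n g a ha)
  let φ : (A ⧸ I ^ (n + 1)) →+* (A ⧸ I ^ n) :=
    Ideal.Quotient.factor (Ideal.pow_le_pow_right n.le_succ)
  have hσmk : ∀ (g : G) (a : A),
      σ g (Ideal.Quotient.mk (I ^ (n + 1)) a) = Ideal.Quotient.mk (I ^ (n + 1)) (g • a) :=
    fun g a => Ideal.quotientMap_mk
  have hτmk : ∀ (g : G) (a : A),
      τ g (Ideal.Quotient.mk (I ^ n) a) = Ideal.Quotient.mk (I ^ n) (g • a) :=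
    fun g a => Ideal.quotientMap_mk
  have hφmk : ∀ a : A,
      φ (Ideal.Quotient.mk (I ^ (n + 1)) a) = Ideal.Quotient.mk (I ^ n) a :=
    fun a => Ideal.Quotient.factor_mk _ a
  have hσ : ∀ (g h : G) (b : A ⧸ I ^ (n + 1)), σ (g * h) b = σ g (σ h b) := by
    intro g h b
    obtain ⟨a, rfl⟩ := Ideal.Quotient.mk_surjective b
    rw [hσmk, hσmk, hσmk, mul_smul]
  have hφσ : ∀ (g : G) (b : A ⧸ I ^ (n + 1)), φ (σ g b) = τ g (φ b) := by
    intro g b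
    obtain ⟨a, rfl⟩ := Ideal.Quotient.mk_surjective b
    rw [hσmk, hφmk, hφmk, hτmk]
  have hφsurj : Function.Surjective φ := by
    intro cx
    obtain ⟨a, rfl⟩ := Ideal.Quotient.mk_surjective cx
    exact ⟨Ideal.Quotient.mk _ a, hφmk a⟩
  have hjmul : ∀ m m' : M n, j n m * j n m' = 0 := by
    intro m m'
    obtain ⟨a, haI, ha⟩ := (Ideal.mem_map_iff_of_surjective _
      Ideal.Quotient.mk_surjective).1 ((hj_range n (j n m)).1 ⟨m, rfl⟩)
    obtain ⟨a', haI', ha'⟩ := (Ideal.mem_map_iff_of_surjective _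
      Ideal.Quotient.mk_surjective).1 ((hj_range n (j n m')).1 ⟨m', rfl⟩)
    rw [← ha, ← ha', ← map_mul]
    refine Ideal.Quotient.eq_zero_iff_mem.2 ?_
    have h2n : I ^ (n + n) ≤ I ^ (n + 1) := Ideal.pow_le_pow_right (by omega)
    exact h2n (by rw [pow_add]; exact Ideal.mul_mem_mul haI haI')
  have hjker : ∀ b : A ⧸ I ^ (n + 1), φ b = 1 →
      ∃ m : M n, (1 : A ⧸ I ^ (n + 1)) + j n m = b := by
    intro b hb
    obtain ⟨a, rfl⟩ := Ideal.Quotient.mk_surjective b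
    rw [hφmk] at hb
    have hI : a - 1 ∈ I ^ n := by
      refine Ideal.Quotient.eq.1 ?_
      rw [map_one]
      exact hb
    obtain ⟨m, hm⟩ := (hj_range n (Ideal.Quotient.mk _ (a - 1))).2
      (Ideal.mem_map_of_mem _ hI)
    exact ⟨m, by rw [hm, map_sub, map_one]; ring⟩
  have hφj : ∀ m : M n, φ (j n m) = 0 := by
    intro m
    obtain ⟨a, haI, ha⟩ := (Ideal.mem_map_iff_of_surjective _
      Ideal.Quotient.mk_surjective).1 ((hj_range n (j n m)).1 ⟨m, rfl⟩)
    rw [← ha, hφmk]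
    exact Ideal.Quotient.eq_zero_iff_mem.2 haI
  have hjσ : ∀ (g : G) (m : M n), j n (g • m) = σ g (j n m) := by
    intro g m
    obtain ⟨a, ha⟩ := Ideal.Quotient.mk_surjective (j n m)
    rw [← ha, hσmk]
    exact hj_equiv n g m a ha.symm
  obtain ⟨P1, P2, P3⟩ := stmt11_core σ τ φ hσ hφσ hφsurj (j n) (hj_inj n)
    hjmul hjker hφj hjσ (h1 n hn) (h2 n hn)
  refine ⟨?_, ?_, ?_⟩
  · intro u hu
    obtain ⟨v, hv1, hv2⟩ := P1 u (fun g => by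
      obtain ⟨a, ha⟩ := Ideal.Quotient.mk_surjective ((u : A ⧸ I ^ n))
      rw [← ha, hτmk, ha]
      exact hu g a ha)
    refine ⟨v, fun g a ha => ?_, hv2⟩
    rw [← hv1 g, ← ha, hσmk]
  · intro c hc hex
    have hcU : ∀ g h, ((c (g * h) : (A ⧸ I ^ (n + 1))ˣ) : A ⧸ I ^ (n + 1)) =
        σ g ↑(c h) * ↑(c g) := by
      intro g h
      obtain ⟨xx, hxx⟩ := Ideal.Quotient.mk_surjective ((c h : (A ⧸ I ^ (n + 1))ˣ) : A ⧸ I ^ (n + 1))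
      rw [← hxx, hσmk]
      exact hc g h xx hxx
    obtain ⟨b, hb⟩ := hex
    have hbU : ∀ g : G, φ ↑(c g) = τ g ↑b * ↑(b⁻¹) := by
      intro g
      obtain ⟨a, ha⟩ := Ideal.Quotient.mk_surjective ((b : A ⧸ I ^ n))
      rw [← ha, hτmk]
      exact hb g a ha
    obtain ⟨a, haU⟩ := P2 c hcU ⟨b, hbU⟩
    refine ⟨a, fun g xx hxx => ?_⟩
    rw [haU g, ← hxx, hσmk]
  · intro c hc
    have hcU : ∀ g h, ((c (g * h) : (A ⧸ I ^ n)ˣ) : A ⧸ I ^ n) =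
        τ g ↑(c h) * ↑(c g) := by
      intro g h
      obtain ⟨xx, hxx⟩ := Ideal.Quotient.mk_surjective ((c h : (A ⧸ I ^ n)ˣ) : A ⧸ I ^ n)
      rw [← hxx, hτmk]
      exact hc g h xx hxx
    obtain ⟨c', hc'1, hc'2⟩ := P3 c hcU
    refine ⟨c', fun g h xx hxx => ?_, 1, fun g a ha => ?_⟩
    · rw [hc'1 g h, ← hxx, hσmk]
    · have h1a : Ideal.Quotient.mk (I ^ n) (g • a) = 1 := by
        rw [← hτmk, ha, Units.val_one, map_one]
      simp only [h1a, inv_one, Units.val_one, one_mul, mul_one]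
      exact hc'2 g
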